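/- For a finite group G with a supercharacter theory, and superclasses K₁, K₂ ∈ SCl(G), the second orthogonality relation holds: Σ_{χ∈SCh(G)} (c(χ)/χ(1)) χ(K₁) conj(χ(K₂)) = (|G|/|K₁|) δ_{K₁,K₂}. -/

import Mathlib

open scoped BigOperators
open Finset

/-- The Frobenius scalar product `⟨f,g⟩ = (1/|G|) Σ_{x∈G} f(x) conj(g(x))`. -/
noncomputable def frob (G : Type*) [Fintype G] [Group G] (f g : G → ℂ) : ℂ :=
  (Fintype.card G : ℂ)⁻¹ * ∑ x : G, f x * (starRingEnd ℂ) (g x)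

/-- second orthogonality for a supercharacter theory `(SCl, SCh)` of a
finite group `G`: for superclasses `K₁, K₂` and representatives `g₁ ∈ K₁`, `g₂ ∈ K₂`,
`Σ_{χ∈SCh} (c(χ)/χ(1)) χ(K₁) conj(χ(K₂)) = (|G|/|K₁|) δ_{K₁,K₂}`. -/
theorem stmt1 (G : Type*) [Fintype G] [Group G] [DecidableEq G]
    (SCl : Finset (Finset G)) (SCh : Finset (G → ℂ)) (c : (G → ℂ) → ℂ)
    -- SCl is a partition of G into (nonempty) superclasses
    (hpart : ∀ g : G, ∃! K, K ∈ SCl ∧ g ∈ K)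
    (hne : ∀ K ∈ SCl, K.Nonempty)
    -- supercharacters are constant on superclasses
    (hconst : ∀ χ ∈ SCh, ∀ K ∈ SCl, ∀ g ∈ K, ∀ h ∈ K, χ g = χ h)
    -- the supercharacter table is square
    (hcard : SCl.card = SCh.card)
    -- degrees are nonzero and c(χ)/χ(1) is a positive real
    (hdeg : ∀ χ ∈ SCh, χ 1 ≠ 0)
    (hpos : ∀ χ ∈ SCh, ∃ r : ℝ, 0 < r ∧ c χ / χ 1 = (r : ℂ))
    -- first orthogonality relations (may be assumed)
    (horth : ∀ χ₁ ∈ SCh, ∀ χ₂ ∈ SCh,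
      frob G χ₁ χ₂ = if χ₁ = χ₂ then χ₁ 1 / c χ₁ else 0)
    (K₁ K₂ : Finset G) (hK₁ : K₁ ∈ SCl) (hK₂ : K₂ ∈ SCl)
    (g₁ : G) (hg₁ : g₁ ∈ K₁) (g₂ : G) (hg₂ : g₂ ∈ K₂) :
    ∑ χ ∈ SCh, (c χ / χ 1) * χ g₁ * (starRingEnd ℂ) (χ g₂)
      = ((Fintype.card G : ℂ) / (K₁.card : ℂ)) * (if K₁ = K₂ then 1 else 0) := by
  classical
  have hGpos : 0 < Fintype.card G := Fintype.card_pos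
  have hG0 : (Fintype.card G : ℂ) ≠ 0 := Nat.cast_ne_zero.mpr hGpos.ne'
  have hcardeq : Fintype.card {K // K ∈ SCl} = Fintype.card {χ // χ ∈ SCh} := by
    rw [Fintype.card_coe, Fintype.card_coe, hcard]
  let e : {K // K ∈ SCl} ≃ {χ // χ ∈ SCh} := Fintype.equivOfCardEq hcardeq
  let rep : {K // K ∈ SCl} → G := fun K => (hne K.1 K.2).choose
  have hrep : ∀ K : {K // K ∈ SCl}, rep K ∈ K.1 := fun K => (hne K.1 K.2).choose_spec
  have hval : ∀ χ ∈ SCh, ∀ K : {K // K ∈ SCl}, ∀ g ∈ K.1, χ g = χ (rep K) :=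
    fun χ hχ K g hg => hconst χ hχ K.1 K.2 g hg (rep K) (hrep K)
  -- positive reals r χ = c χ / χ 1
  let r : {χ // χ ∈ SCh} → ℝ := fun χ => (hpos χ.1 χ.2).choose
  have hr_pos : ∀ χ : {χ // χ ∈ SCh}, 0 < r χ := fun χ => (hpos χ.1 χ.2).choose_spec.1
  have hr_eq : ∀ χ : {χ // χ ∈ SCh}, c χ.1 / χ.1 1 = (r χ : ℂ) :=
    fun χ => (hpos χ.1 χ.2).choose_spec.2
  have hc0 : ∀ χ : {χ // χ ∈ SCh}, c χ.1 ≠ 0 := by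
    intro χ h
    have h2 := hr_eq χ
    rw [h, zero_div] at h2
    have : (r χ : ℂ) ≠ 0 := Complex.ofReal_ne_zero.mpr (hr_pos χ).ne'
    exact this h2.symm
  have hrecip : ∀ χ : {χ // χ ∈ SCh}, χ.1 1 / c χ.1 = ((r χ : ℂ))⁻¹ := by
    intro χ
    rw [← hr_eq χ, inv_div]
  -- sum over G decomposes into superclasses
  have hsum : ∀ F : G → ℂ, ∑ x : G, F x = ∑ K ∈ SCl, ∑ g ∈ K, F g := by
    intro F
    have huniv : (Finset.univ : Finset G) = SCl.biUnion id := by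
      ext g
      simp only [mem_univ, mem_biUnion, id, true_iff]
      obtain ⟨K, hK, -⟩ := hpart g
      exact ⟨K, hK.1, hK.2⟩
    have hdisj : ∀ K ∈ SCl, ∀ L ∈ SCl, K ≠ L → Disjoint (id K) (id L) := by
      intro K hK L hL hKL
      rw [Finset.disjoint_left]
      intro g hgK hgL
      obtain ⟨M, -, hMuniq⟩ := hpart g
      exact hKL ((hMuniq K ⟨hK, hgK⟩).trans (hMuniq L ⟨hL, hgL⟩).symm)
    rw [huniv, Finset.sum_biUnion hdisj]; rfl
  -- frob in terms of class sums
  have hfrob : ∀ χ₁ ∈ SCh, ∀ χ₂ ∈ SCh,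
      frob G χ₁ χ₂ = ∑ K : {K // K ∈ SCl},
        ((K.1.card : ℂ) / (Fintype.card G : ℂ)) * (χ₁ (rep K) * (starRingEnd ℂ) (χ₂ (rep K)))
      := by
    intro χ₁ h₁ χ₂ h₂
    rw [frob, hsum]
    rw [← Finset.sum_coe_sort SCl (fun K => ∑ g ∈ K, χ₁ g * (starRingEnd ℂ) (χ₂ g))]
    rw [Finset.mul_sum]
    refine Finset.sum_congr rfl ?_
    intro K _
    have hg : ∀ g ∈ K.1, χ₁ g * (starRingEnd ℂ) (χ₂ g)
        = χ₁ (rep K) * (starRingEnd ℂ) (χ₂ (rep K)) := by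
      intro g hg
      rw [hval χ₁ h₁ K g hg, hval χ₂ h₂ K g hg]
    rw [Finset.sum_congr rfl hg, Finset.sum_const, nsmul_eq_mul]
    ring
  -- weight squares
  have hw_sq : ∀ j : {K // K ∈ SCl},
      ((Real.sqrt ((j.1.card : ℝ) / (Fintype.card G : ℝ)) : ℝ) : ℂ)
        * ((Real.sqrt ((j.1.card : ℝ) / (Fintype.card G : ℝ)) : ℝ) : ℂ)
        = (j.1.card : ℂ) / (Fintype.card G : ℂ) := by
    intro j
    rw [← Complex.ofReal_mul, Real.mul_self_sqrt (div_nonneg (Nat.cast_nonneg _) (Nat.cast_nonneg _))]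
    push_cast
    ring
  have hs_sq : ∀ χ : {χ // χ ∈ SCh},
      ((Real.sqrt (r χ) : ℝ) : ℂ) * ((Real.sqrt (r χ) : ℝ) : ℂ) = ((r χ : ℂ)) := by
    intro χ
    rw [← Complex.ofReal_mul, Real.mul_self_sqrt (hr_pos χ).le]
  -- the matrix
  set B : Matrix {K // K ∈ SCl} {K // K ∈ SCl} ℂ := fun i j =>
    ((Real.sqrt (r (e i)) : ℝ) : ℂ)
      * ((Real.sqrt ((j.1.card : ℝ) / (Fintype.card G : ℝ)) : ℝ) : ℂ)
      * (e i).1 (rep j) with hBdef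
  have hBB : B * B.conjTranspose = 1 := by
    ext i j
    rw [Matrix.mul_apply, Matrix.one_apply]
    have hentry : ∀ k : {K // K ∈ SCl}, B i k * B.conjTranspose k j
        = ((Real.sqrt (r (e i)) : ℝ) : ℂ) * ((Real.sqrt (r (e j)) : ℝ) : ℂ)
          * (((k.1.card : ℂ) / (Fintype.card G : ℂ))
            * ((e i).1 (rep k) * (starRingEnd ℂ) ((e j).1 (rep k)))) := by
      intro k
      rw [Matrix.conjTranspose_apply, hBdef]
      simp only [star_mul', Complex.star_def, Complex.conj_ofReal]
      rw [← hw_sq k]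
      ring
    rw [Finset.sum_congr rfl (fun k _ => hentry k), ← Finset.mul_sum,
      ← hfrob (e i).1 (e i).2 (e j).1 (e j).2, horth (e i).1 (e i).2 (e j).1 (e j).2]
    by_cases hij : i = j
    · subst hij
      rw [if_pos rfl, if_pos rfl, hrecip (e i), hs_sq (e i),
        mul_inv_cancel₀ (Complex.ofReal_ne_zero.mpr (hr_pos (e i)).ne')]
    · have : (e i).1 ≠ (e j).1 := by
        intro h
        exact hij (e.injective (Subtype.ext h))
      rw [if_neg this, if_neg hij, mul_zero]
  have hB'B : B.conjTranspose * B = 1 := mul_eq_one_comm.mp hBB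
  have key : (B.conjTranspose * B) ⟨K₂, hK₂⟩ ⟨K₁, hK₁⟩
      = (1 : Matrix {K // K ∈ SCl} {K // K ∈ SCl} ℂ) ⟨K₂, hK₂⟩ ⟨K₁, hK₁⟩ := by rw [hB'B]
  rw [Matrix.mul_apply, Matrix.one_apply] at key
  have hterm : ∀ i : {K // K ∈ SCl}, B.conjTranspose ⟨K₂, hK₂⟩ i * B i ⟨K₁, hK₁⟩
      = ((c (e i).1 / (e i).1 1) * (e i).1 g₁ * (starRingEnd ℂ) ((e i).1 g₂))
        * (((Real.sqrt ((K₁.card : ℝ) / (Fintype.card G : ℝ))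
            * Real.sqrt ((K₂.card : ℝ) / (Fintype.card G : ℝ)) : ℝ)) : ℂ) := by
    intro i
    rw [Matrix.conjTranspose_apply, hBdef]
    simp only [star_mul', Complex.star_def, Complex.conj_ofReal]
    rw [hr_eq (e i), hval (e i).1 (e i).2 ⟨K₁, hK₁⟩ g₁ hg₁,
      hval (e i).1 (e i).2 ⟨K₂, hK₂⟩ g₂ hg₂, ← hs_sq (e i), Complex.ofReal_mul]
    ring
  rw [Finset.sum_congr rfl (fun i _ => hterm i), ← Finset.sum_mul] at key
  have hre : ∑ i : {K // K ∈ SCl},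
      (c (e i).1 / (e i).1 1) * (e i).1 g₁ * (starRingEnd ℂ) ((e i).1 g₂)
      = ∑ χ ∈ SCh, (c χ / χ 1) * χ g₁ * (starRingEnd ℂ) (χ g₂) := by
    rw [Equiv.sum_comp e (fun χ : {χ // χ ∈ SCh} =>
      (c χ.1 / χ.1 1) * χ.1 g₁ * (starRingEnd ℂ) (χ.1 g₂))]
    exact Finset.sum_coe_sort SCh (fun χ => (c χ / χ 1) * χ g₁ * (starRingEnd ℂ) (χ g₂))
  rw [hre] at key
  by_cases h : K₁ = K₂
  · subst h
    rw [if_pos (Subtype.ext rfl), Complex.ofReal_mul] at key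
    have hww := hw_sq ⟨K₁, hK₁⟩
    simp only at hww
    rw [hww] at key
    have hk : (K₁.card : ℂ) ≠ 0 := Nat.cast_ne_zero.mpr (hne K₁ hK₁).card_pos.ne'
    rw [if_pos rfl, mul_one]
    field_simp at key ⊢
    linear_combination key
  · have hne' : (⟨K₂, hK₂⟩ : {K // K ∈ SCl}) ≠ ⟨K₁, hK₁⟩ := by
      intro hh
      exact h (congrArg Subtype.val hh).symm
    rw [if_neg hne'] at key
    have hw0 : ((Real.sqrt ((K₁.card : ℝ) / (Fintype.card G : ℝ))
        * Real.sqrt ((K₂.card : ℝ) / (Fintype.card G : ℝ)) : ℝ)) ≠ 0 := by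
      have h1 : (0:ℝ) < (K₁.card : ℝ) / (Fintype.card G : ℝ) := by
        have := (hne K₁ hK₁).card_pos
        exact div_pos (Nat.cast_pos.mpr this) (Nat.cast_pos.mpr hGpos)
      have h2 : (0:ℝ) < (K₂.card : ℝ) / (Fintype.card G : ℝ) := by
        have := (hne K₂ hK₂).card_pos
        exact div_pos (Nat.cast_pos.mpr this) (Nat.cast_pos.mpr hGpos)
      exact (mul_pos (Real.sqrt_pos.mpr h1) (Real.sqrt_pos.mpr h2)).ne'
    rw [if_neg h, mul_zero]
    rcases mul_eq_zero.mp key with h0 | h0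
    · exact h0
    · exact absurd h0 (Complex.ofReal_ne_zero.mpr hw0)
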